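/- Define c̃(ρ) = (erf⁻¹(ρ))². The inverse of its derivative c̃' is given in closed form by (c̃')⁻¹(x) = erf(√(W(2x²/π)/2)) for x > 0, where W is the principal branch of the Lambert W function. -/

import Mathlib

/-- The Gaussian error function `erf z = (2/√π) ∫₀^z e^{-t²} dt`. -/
noncomputable def erf (z : ℝ) : ℝ :=
  (2 / Real.sqrt Real.pi) * ∫ t in (0:ℝ)..z, Real.exp (-t ^ 2)

/-- The inverse of the Gaussian error function. -/
noncomputable def erfInv : ℝ → ℝ := Function.invFun erf

/-- The cost function `c̃(ρ) = (erfInv ρ)²`. -/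
noncomputable def ctilde (ρ : ℝ) : ℝ := erfInv ρ ^ 2

/-- The principal branch of the Lambert W function (on the nonnegative reals it is the
unique inverse of `w ↦ w·eʷ`). -/
noncomputable def lambertW : ℝ → ℝ := Function.invFun (fun w : ℝ => w * Real.exp w)


open Real MeasureTheory Set Filter Topology

lemma int_gauss : IntegrableOn (fun t : ℝ => Real.exp (-t ^ 2)) (Ioi 0) := by
  have := (integrable_exp_neg_mul_sq (b := 1) one_pos).integrableOn (s := Ioi 0)
  simpa using this

lemma hasDerivAt_erf (z : ℝ) :
    HasDerivAt erf (2 / Real.sqrt Real.pi * Real.exp (-z ^ 2)) z := by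
  have hc : Continuous fun t : ℝ => Real.exp (-t ^ 2) := by continuity
  have h : HasDerivAt (fun u : ℝ => ∫ t in (0:ℝ)..u, Real.exp (-t ^ 2))
      (Real.exp (-z ^ 2)) z :=
    intervalIntegral.integral_hasDerivAt_right (hc.intervalIntegrable 0 z)
      (hc.aestronglyMeasurable.stronglyMeasurableAtFilter) hc.continuousAt
  exact h.const_mul (2 / Real.sqrt Real.pi)

lemma erf_strictMono : StrictMono erf := by
  apply strictMono_of_deriv_pos
  intro z
  rw [(hasDerivAt_erf z).deriv]
  have : 0 < Real.sqrt Real.pi := Real.sqrt_pos.2 Real.pi_pos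
  positivity

lemma erf_zero : erf 0 = 0 := by simp [erf]

lemma tendsto_erf : Tendsto erf atTop (𝓝 1) := by
  have h := MeasureTheory.intervalIntegral_tendsto_integral_Ioi 0 int_gauss tendsto_id
  have hval : (∫ t in Ioi (0:ℝ), Real.exp (-t ^ 2)) = Real.sqrt Real.pi / 2 := by
    simpa using integral_gaussian_Ioi 1
  rw [hval] at h
  have h2 := h.const_mul (2 / Real.sqrt Real.pi)
  have hπ : Real.sqrt Real.pi ≠ 0 := ne_of_gt (Real.sqrt_pos.2 Real.pi_pos)
  have : 2 / Real.sqrt Real.pi * (Real.sqrt Real.pi / 2) = 1 := by field_simp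
  rw [this] at h2
  exact h2

lemma erf_lt_one (z : ℝ) : erf z < 1 := by
  have h1 : erf z < erf (z + 1) := erf_strictMono (lt_add_one z)
  have h2 : erf (z + 1) ≤ 1 := by
    refine ge_of_tendsto tendsto_erf ?_
    filter_upwards [eventually_ge_atTop (z + 1)] with y hy
    exact erf_strictMono.monotone hy
  linarith

lemma erf_continuous : Continuous erf := by
  have : Differentiable ℝ erf := fun z => (hasDerivAt_erf z).differentiableAt
  exact this.continuous

lemma exists_erf_eq {ρ : ℝ} (hρ : ρ ∈ Ioo (0:ℝ) 1) : ∃ t, 0 < t ∧ erf t = ρ := by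
  obtain ⟨y, hy⟩ : ∃ y, ρ < erf y := by
    have : ∀ᶠ y in atTop, ρ < erf y :=
      tendsto_erf.eventually (eventually_gt_nhds hρ.2)
    exact this.exists
  have h0 : erf 0 < ρ := by rw [erf_zero]; exact hρ.1
  have hsub : Ioo (erf 0) (erf y) ⊆ erf '' Ioo 0 y :=
    intermediate_value_Ioo (le_of_lt (erf_strictMono.lt_iff_lt.1 (h0.trans hy)))
      erf_continuous.continuousOn
  obtain ⟨t, ht, het⟩ := hsub ⟨h0, hy⟩
  exact ⟨t, ht.1, het⟩

lemma erfInv_erf (t : ℝ) : erfInv (erf t) = t :=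
  Function.leftInverse_invFun erf_strictMono.injective t

lemma erf_erfInv {ρ : ℝ} (hρ : ρ ∈ Ioo (0:ℝ) 1) : erf (erfInv ρ) = ρ := by
  obtain ⟨t, _, ht⟩ := exists_erf_eq hρ
  exact Function.invFun_eq ⟨t, ht⟩

lemma erfInv_pos {ρ : ℝ} (hρ : ρ ∈ Ioo (0:ℝ) 1) : 0 < erfInv ρ := by
  have h := erf_erfInv hρ
  have : erf 0 < erf (erfInv ρ) := by rw [erf_zero, h]; exact hρ.1
  exact erf_strictMono.lt_iff_lt.1 this

lemma continuousAt_erfInv {ρ : ℝ} (hρ : ρ ∈ Ioo (0:ℝ) 1) : ContinuousAt erfInv ρ := by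
  rw [ContinuousAt]
  apply tendsto_order.2
  constructor
  · intro b hb
    have hbρ : erf b < ρ := by
      have := erf_strictMono hb
      rwa [erf_erfInv hρ] at this
    have hmem : ρ ∈ Ioo (max (erf b) 0) 1 := ⟨max_lt hbρ hρ.1, hρ.2⟩
    filter_upwards [isOpen_Ioo.mem_nhds hmem] with y hy
    have hy01 : y ∈ Ioo (0:ℝ) 1 := ⟨lt_of_le_of_lt (le_max_right _ _) hy.1, hy.2⟩
    have : erf b < erf (erfInv y) := by
      rw [erf_erfInv hy01]
      exact lt_of_le_of_lt (le_max_left _ _) hy.1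
    exact erf_strictMono.lt_iff_lt.1 this
  · intro b hb
    have hbρ : ρ < erf b := by
      have := erf_strictMono hb
      rwa [erf_erfInv hρ] at this
    have hmem : ρ ∈ Ioo (0:ℝ) (min (erf b) 1) := ⟨hρ.1, lt_min hbρ hρ.2⟩
    filter_upwards [isOpen_Ioo.mem_nhds hmem] with y hy
    have hy01 : y ∈ Ioo (0:ℝ) 1 := ⟨hy.1, lt_of_lt_of_le hy.2 (min_le_right _ _)⟩
    have : erf (erfInv y) < erf b := by
      rw [erf_erfInv hy01]
      exact lt_of_lt_of_le hy.2 (min_le_left _ _)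
    exact erf_strictMono.lt_iff_lt.1 this

lemma hasDerivAt_erfInv {ρ : ℝ} (hρ : ρ ∈ Ioo (0:ℝ) 1) :
    HasDerivAt erfInv (2 / Real.sqrt Real.pi * Real.exp (-(erfInv ρ) ^ 2))⁻¹ ρ := by
  have hπ : 0 < Real.sqrt Real.pi := Real.sqrt_pos.2 Real.pi_pos
  refine HasDerivAt.of_local_left_inverse (continuousAt_erfInv hρ) (hasDerivAt_erf _)
    (by positivity) ?_
  filter_upwards [isOpen_Ioo.mem_nhds hρ] with y hy
  exact erf_erfInv hy

lemma deriv_ctilde {ρ : ℝ} (hρ : ρ ∈ Ioo (0:ℝ) 1) :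
    deriv ctilde ρ = Real.sqrt Real.pi * erfInv ρ * Real.exp (erfInv ρ ^ 2) := by
  have h : HasDerivAt ctilde
      (↑2 * erfInv ρ ^ 1 * (2 / Real.sqrt Real.pi * Real.exp (-(erfInv ρ) ^ 2))⁻¹) ρ :=
    (hasDerivAt_erfInv hρ).pow 2
  rw [h.deriv]
  have hπ : Real.sqrt Real.pi ≠ 0 := ne_of_gt (Real.sqrt_pos.2 Real.pi_pos)
  have he : Real.exp (-(erfInv ρ) ^ 2) = (Real.exp (erfInv ρ ^ 2))⁻¹ := by
    rw [← Real.exp_neg]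
  rw [he]
  have hexp : Real.exp (erfInv ρ ^ 2) ≠ 0 := Real.exp_ne_zero _
  field_simp

lemma gfun_strictMonoOn : StrictMonoOn (fun w : ℝ => w * Real.exp w) (Ici 0) := by
  intro a ha b hb hab
  simp only
  rcases eq_or_lt_of_le (mem_Ici.1 ha) with h | h
  · rw [← h]
    simpa using mul_pos (lt_of_le_of_lt ha hab) (Real.exp_pos b)
  · exact mul_lt_mul'' hab (Real.exp_strictMono hab) h.le (Real.exp_pos a).le

lemma gfun_surj {z : ℝ} (hz : 0 ≤ z) : ∃ w, 0 ≤ w ∧ w * Real.exp w = z := by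
  have hc : Continuous fun w : ℝ => w * Real.exp w := by continuity
  have hge : z ≤ z * Real.exp z := le_mul_of_one_le_right hz (Real.one_le_exp hz)
  have hsub : Icc ((0:ℝ) * Real.exp 0) (z * Real.exp z) ⊆
      (fun w : ℝ => w * Real.exp w) '' Icc 0 z := by
    apply intermediate_value_Icc hz hc.continuousOn
  obtain ⟨w, hw, hwz⟩ := hsub ⟨by simp [hz], hge⟩
  exact ⟨w, hw.1, hwz⟩

lemma lambertW_spec {z : ℝ} (hz : 0 < z) :
    0 < lambertW z ∧ lambertW z * Real.exp (lambertW z) = z := by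
  obtain ⟨w, hw0, hwz⟩ := gfun_surj hz.le
  have heq : lambertW z * Real.exp (lambertW z) = z := by
    have := Function.invFun_eq (f := fun w : ℝ => w * Real.exp w) ⟨w, hwz⟩
    simpa [lambertW] using this
  refine ⟨?_, heq⟩
  by_contra h
  push_neg at h
  have : lambertW z * Real.exp (lambertW z) ≤ 0 :=
    mul_nonpos_of_nonpos_of_nonneg h (Real.exp_pos _).le
  linarith

lemma lambertW_gfun {w : ℝ} (hw : 0 < w) : lambertW (w * Real.exp w) = w := by
  have hz : 0 < w * Real.exp w := mul_pos hw (Real.exp_pos w)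
  obtain ⟨h1, h2⟩ := lambertW_spec hz
  exact gfun_strictMonoOn.injOn (mem_Ici.2 h1.le) (mem_Ici.2 hw.le) h2

lemma erf_mem_Ioo {t : ℝ} (ht : 0 < t) : erf t ∈ Ioo (0:ℝ) 1 := by
  constructor
  · have := erf_strictMono ht
    rwa [erf_zero] at this
  · exact erf_lt_one t

lemma deriv_ctilde_erf {t : ℝ} (ht : 0 < t) :
    deriv ctilde (erf t) = Real.sqrt Real.pi * t * Real.exp (t ^ 2) := by
  rw [deriv_ctilde (erf_mem_Ioo ht), erfInv_erf]


/-- The inverse of `c̃'` is `x ↦ erf(√(W(2x²/π)/2))` for `x > 0`: applying `c̃'` to this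
expression recovers `x`, and applying the expression to `c̃'(ρ)` recovers `ρ ∈ (0,1)`. -/
theorem ctilde_deriv_inverse :
    (∀ x : ℝ, 0 < x →
      deriv ctilde (erf (Real.sqrt (lambertW (2 * x ^ 2 / Real.pi) / 2))) = x) ∧
    (∀ ρ ∈ Set.Ioo (0:ℝ) 1,
      erf (Real.sqrt (lambertW (2 * (deriv ctilde ρ) ^ 2 / Real.pi) / 2)) = ρ) := by
  have hπ : (0:ℝ) < Real.pi := Real.pi_pos
  have hsπ : (0:ℝ) < Real.sqrt Real.pi := Real.sqrt_pos.2 hπ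
  constructor
  · intro x hx
    set z := 2 * x ^ 2 / Real.pi with hz_def
    have hz : 0 < z := by positivity
    obtain ⟨hu0, hueq⟩ := lambertW_spec hz
    set u := lambertW z
    set t := Real.sqrt (u / 2) with ht_def
    have ht : 0 < t := Real.sqrt_pos.2 (by linarith)
    have ht2 : t ^ 2 = u / 2 := Real.sq_sqrt (by linarith)
    rw [deriv_ctilde_erf ht]
    set a := Real.sqrt Real.pi * t * Real.exp (t ^ 2) with ha_def
    have ha : 0 < a := by positivity
    have hsq : a ^ 2 = x ^ 2 := by
      have he : Real.exp (t ^ 2) ^ 2 = Real.exp u := by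
        rw [sq, ← Real.exp_add, ht2]
        norm_num
      have h1 : a ^ 2 = Real.pi * (u / 2) * Real.exp u := by
        rw [ha_def, mul_pow, mul_pow, Real.sq_sqrt hπ.le, he, ht2]
      have h2 : Real.pi * (u * Real.exp u) = 2 * x ^ 2 := by
        rw [hueq, hz_def]
        field_simp
      rw [h1]
      linear_combination h2 / 2
    have hfac : (a - x) * (a + x) = 0 := by linear_combination hsq
    rcases mul_eq_zero.1 hfac with h | h
    · linarith
    · linarith
  · intro ρ hρ
    have ht : 0 < erfInv ρ := erfInv_pos hρ
    set t := erfInv ρ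
    rw [deriv_ctilde hρ]
    have hx2 : 2 * (Real.sqrt Real.pi * t * Real.exp (t ^ 2)) ^ 2 / Real.pi
        = (2 * t ^ 2) * Real.exp (2 * t ^ 2) := by
      have : (Real.sqrt Real.pi) ^ 2 = Real.pi := Real.sq_sqrt hπ.le
      have he : Real.exp (t ^ 2) ^ 2 = Real.exp (2 * t ^ 2) := by
        rw [sq, ← Real.exp_add]
        ring_nf
      rw [mul_pow, mul_pow, this, he]
      field_simp
    rw [hx2, lambertW_gfun (by positivity), mul_comm, mul_div_assoc]
    norm_num
    rw [Real.sqrt_sq ht.le]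
    exact erf_erfInv hρ
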